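/- arXiv:1511.00785 — 2 statements merged into one kernel-verified Lean document; each statement's English description precedes it below -/
import Mathlib

section
/- Let G be an α-action, n-player game with payoffs in [0,1], ε ∈ (0,1), and G' the majority-group game with s = 2α²·⌈ln(n/ε)⌉ players per group. If x is an ε-approximate Nash equilibrium of G', and y is obtained from the majority distributions x̄_i by truncating entries ≤ ε/n and renormalizing, then y is a (4αε)-well-supported Nash equilibrium of G. -/
open Finset

def IsDist (α : ℕ) (p : Fin α → ℝ) : Prop := (∀ k, 0 ≤ p k) ∧ ∑ k, p k = 1

noncomputable def expPay {I : Type*} [Fintype I] [DecidableEq I] {α : ℕ}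
    (u : (I → Fin α) → ℝ) (x : I → Fin α → ℝ) : ℝ :=
  ∑ a : I → Fin α, (∏ j, x j (a j)) * u a

noncomputable def purePay {I : Type*} [Fintype I] [DecidableEq I] {α : ℕ}
    (u : (I → Fin α) → ℝ) (x : I → Fin α → ℝ) (i : I) (k : Fin α) : ℝ :=
  expPay u (Function.update x i (fun b => if b = k then (1:ℝ) else 0))

def IsANE {I : Type*} [Fintype I] [DecidableEq I] {α : ℕ}
    (u : I → (I → Fin α) → ℝ) (x : I → Fin α → ℝ) (ε : ℝ) : Prop :=
  ∀ i k, purePay (u i) x i k - ε ≤ expPay (u i) x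

def IsWSNE {I : Type*} [Fintype I] [DecidableEq I] {α : ℕ}
    (u : I → (I → Fin α) → ℝ) (x : I → Fin α → ℝ) (ε : ℝ) : Prop :=
  ∀ i k, 0 < x i k → ∀ k', purePay (u i) x i k' - ε ≤ purePay (u i) x i k

noncomputable def tvDist {α : ℕ} (p q : Fin α → ℝ) : ℝ := (1/2) * ∑ k, |p k - q k|

def actCount {s α : ℕ} (g : Fin s → Fin α) (k : Fin α) : ℕ :=
  (Finset.univ.filter fun j => g j = k).card

noncomputable def maj {s α : ℕ} [NeZero α] (g : Fin s → Fin α) : Fin α :=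
  (Finset.univ.filter fun k : Fin α => ∀ k', actCount g k' ≤ actCount g k).min' (by
    obtain ⟨k, -, hk⟩ := Finset.exists_max_image Finset.univ (actCount g) ⟨default, mem_univ _⟩
    exact ⟨k, mem_filter.mpr ⟨mem_univ k, fun k' => hk k' (mem_univ k')⟩⟩)

noncomputable def groupPayoff {n s α : ℕ} [NeZero α]
    (u : Fin n → (Fin n → Fin α) → ℝ) (i : Fin n) (j : Fin s)
    (a : Fin n × Fin s → Fin α) : ℝ :=
  u i (Function.update (fun i' => maj fun j' => a (i', j')) i (a (i, j)))

noncomputable def majDist {n s α : ℕ} [NeZero α]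
    (x : Fin n × Fin s → Fin α → ℝ) (i : Fin n) (k : Fin α) : ℝ :=
  ∑ g : Fin s → Fin α, (∏ j, x (i, j) (g j)) * (if maj g = k then 1 else 0)


section AuxProofs
open Finset

lemma hoeff_bern (p : ℝ) (hp0 : 0 ≤ p) (hp1 : p ≤ 1) (l : ℝ) (hl : 0 ≤ l) :
    1 + p * (Real.exp l - 1) ≤ Real.exp (p * l + l ^ 2 / 8) := by
  set D : ℝ → ℝ := fun t => 1 + p * (Real.exp t - 1) with hDdef
  have hD : ∀ t, 0 < D t := by
    intro t
    have h1 := Real.exp_pos t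
    have h2 : 0 ≤ p * Real.exp t := mul_nonneg hp0 h1.le
    simp only [hDdef]
    nlinarith
  have hDderiv : ∀ t, HasDerivAt D (p * Real.exp t) t := by
    intro t
    have := ((Real.hasDerivAt_exp t).sub_const 1).const_mul p
    exact this.const_add 1
  set ψ : ℝ → ℝ := fun t => p + t / 4 - p * Real.exp t / D t with hψdef
  have hψderiv : ∀ t, HasDerivAt ψ (1 / 4 - p * Real.exp t * (1 - p) / (D t) ^ 2) t := by
    intro t
    have hnum : HasDerivAt (fun t => p * Real.exp t) (p * Real.exp t) t :=
      (Real.hasDerivAt_exp t).const_mul p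
    have hq : HasDerivAt (fun t => p * Real.exp t / D t)
        ((p * Real.exp t * D t - p * Real.exp t * (p * Real.exp t)) / (D t) ^ 2) t :=
      hnum.div (hDderiv t) (hD t).ne'
    have h4 : HasDerivAt (fun t : ℝ => p + t / 4) (1 / 4) t := by
      simpa using ((hasDerivAt_id t).div_const 4).const_add p
    have := h4.sub hq
    refine this.congr_deriv ?_
    have hDt := (hD t).ne'
    field_simp
    simp only [hDdef]; ring
  have hψmono : Monotone ψ := by
    apply monotone_of_deriv_nonneg
    · intro t; exact (hψderiv t).differentiableAt
    · intro t
      rw [(hψderiv t).deriv]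
      have hD2 : (0:ℝ) < (D t) ^ 2 := pow_pos (hD t) 2
      rw [sub_nonneg, div_le_iff₀ hD2]
      simp only [hDdef]
      nlinarith [sq_nonneg ((1 - p) - p * Real.exp t), Real.exp_pos t]
  have hψ0 : ψ 0 = 0 := by simp [hψdef, hDdef]
  have hψnonneg : ∀ t, 0 ≤ t → 0 ≤ ψ t := by
    intro t ht; rw [← hψ0]; exact hψmono ht
  set φ : ℝ → ℝ := fun t => p * t + t ^ 2 / 8 - Real.log (D t) with hφdef
  have hφderiv : ∀ t, HasDerivAt φ (ψ t) t := by
    intro t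
    have hlog : HasDerivAt (fun t => Real.log (D t)) (p * Real.exp t / D t) t :=
      (hDderiv t).log (hD t).ne'
    have hpoly : HasDerivAt (fun t : ℝ => p * t + t ^ 2 / 8) (p + t / 4) t := by
      have h1 : HasDerivAt (fun t : ℝ => p * t) p t := by
        simpa using (hasDerivAt_id t).const_mul p
      have h2 : HasDerivAt (fun t : ℝ => t ^ 2 / 8) (t / 4) t := by
        have := (hasDerivAt_pow 2 t).div_const 8
        refine this.congr_deriv ?_; push_cast; ring
      exact h1.add h2
    have := hpoly.sub hlog
    exact this
  have hφmono : MonotoneOn φ (Set.Ici 0) := by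
    apply monotoneOn_of_deriv_nonneg (convex_Ici 0)
    · exact Continuous.continuousOn (by
        have : Differentiable ℝ φ := fun t => (hφderiv t).differentiableAt
        exact this.continuous)
    · exact fun t _ => (hφderiv t).differentiableAt.differentiableWithinAt
    · intro t ht
      rw [(hφderiv t).deriv]
      exact hψnonneg t (le_of_lt (by simpa using ht))
  have hφ0 : φ 0 = 0 := by simp [hφdef, hDdef]
  have : 0 ≤ φ l := by
    rw [← hφ0]
    exact hφmono (Set.mem_Ici.mpr le_rfl) (Set.mem_Ici.mpr hl) hl
  have hlog : Real.log (D l) ≤ p * l + l ^ 2 / 8 := by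
    simp only [hφdef] at this; linarith
  calc D l ≤ Real.exp (Real.log (D l)) := by rw [Real.exp_log (hD l)]
    _ ≤ Real.exp (p * l + l ^ 2 / 8) := Real.exp_le_exp.mpr hlog


-- PIFACT
lemma sum_prod_pi {I : Type*} [Fintype I] [DecidableEq I] {β : Type*} [Fintype β]
    (G : I → β → ℝ) :
    ∑ h : I → β, ∏ i, G i (h i) = ∏ i, ∑ b, G i b := by
  rw [Finset.prod_univ_sum]
  rw [← Fintype.piFinset_univ]

-- delta distribution
lemma delta_isDist {α : ℕ} (k : Fin α) : IsDist α (fun b => if b = k then (1:ℝ) else 0) := by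
  constructor
  · intro b; by_cases h : b = k <;> simp [h]
  · simp

lemma update_isDist {I : Type*} [DecidableEq I] {α : ℕ} {x : I → Fin α → ℝ}
    (hx : ∀ i, IsDist α (x i)) (i : I) {p : Fin α → ℝ} (hp : IsDist α p) :
    ∀ j, IsDist α (Function.update x i p j) := by
  intro j
  rcases eq_or_ne j i with rfl | h
  · rw [Function.update_self]; exact hp
  · rw [Function.update_of_ne h]; exact hx j

-- bounds on expPay
lemma expPay_nonneg {I : Type*} [Fintype I] [DecidableEq I] {α : ℕ}
    {u : (I → Fin α) → ℝ} (hu : ∀ a, u a ∈ Set.Icc (0:ℝ) 1)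
    {x : I → Fin α → ℝ} (hx : ∀ i, IsDist α (x i)) : 0 ≤ expPay u x := by
  apply Finset.sum_nonneg
  intro a _
  exact mul_nonneg (Finset.prod_nonneg fun j _ => (hx j).1 _) (hu a).1

lemma expPay_le_one {I : Type*} [Fintype I] [DecidableEq I] {α : ℕ}
    {u : (I → Fin α) → ℝ} (hu : ∀ a, u a ∈ Set.Icc (0:ℝ) 1)
    {x : I → Fin α → ℝ} (hx : ∀ i, IsDist α (x i)) : expPay u x ≤ 1 := by
  have h1 : expPay u x ≤ ∑ a : I → Fin α, ∏ j, x j (a j) := by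
    apply Finset.sum_le_sum
    intro a _
    have hw : 0 ≤ ∏ j, x j (a j) := Finset.prod_nonneg fun j _ => (hx j).1 _
    calc (∏ j, x j (a j)) * u a ≤ (∏ j, x j (a j)) * 1 :=
          mul_le_mul_of_nonneg_left (hu a).2 hw
      _ = ∏ j, x j (a j) := mul_one _
  rw [sum_prod_pi] at h1
  calc expPay u x ≤ ∏ i : I, ∑ b, x i b := h1
    _ = 1 := by simp only [fun i => (hx i).2]; simp

lemma purePay_mem_Icc {I : Type*} [Fintype I] [DecidableEq I] {α : ℕ}
    {u : (I → Fin α) → ℝ} (hu : ∀ a, u a ∈ Set.Icc (0:ℝ) 1)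
    {x : I → Fin α → ℝ} (hx : ∀ i, IsDist α (x i)) (i : I) (k : Fin α) :
    purePay u x i k ∈ Set.Icc (0:ℝ) 1 := by
  have h := update_isDist hx i (delta_isDist k)
  exact ⟨expPay_nonneg hu h, expPay_le_one hu h⟩

-- DECOMP
lemma expPay_decomp {I : Type*} [Fintype I] [DecidableEq I] {α : ℕ}
    (u : (I → Fin α) → ℝ) (x : I → Fin α → ℝ) (i : I) :
    expPay u x = ∑ k, x i k * purePay u x i k := by
  unfold purePay expPay
  simp_rw [Finset.mul_sum]
  rw [Finset.sum_comm]
  apply Finset.sum_congr rfl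
  intro a _
  have hsplit : ∀ (w : I → Fin α → ℝ),
      ∏ j, w j (a j) = w i (a i) * ∏ j ∈ univ.erase i, w j (a j) :=
    fun w => (Finset.mul_prod_erase univ (fun j => w j (a j)) (mem_univ i)).symm
  rw [hsplit x]
  have : ∀ k : Fin α,
      (∏ j, Function.update x i (fun b => if b = k then (1:ℝ) else 0) j (a j)) * u a
      = (if a i = k then (1:ℝ) else 0) * ((∏ j ∈ univ.erase i, x j (a j)) * u a) := by
    intro k
    rw [hsplit]
    rw [Function.update_self]
    have : ∏ j ∈ univ.erase i, Function.update x i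
        (fun b => if b = k then (1:ℝ) else 0) j (a j) = ∏ j ∈ univ.erase i, x j (a j) := by
      apply Finset.prod_congr rfl
      intro j hj
      rw [Function.update_of_ne (Finset.ne_of_mem_erase hj)]
    rw [this]; ring
  simp_rw [this, ← mul_assoc, ← Finset.sum_mul]
  have h2 : (∑ k, x i k * (if a i = k then (1:ℝ) else 0)) = x i (a i) := by
    rw [Finset.sum_eq_single (a i)]
    · simp
    · intro b _ hb
      simp [Ne.symm hb]
    · simp
  rw [h2, mul_assoc]

-- TVB
lemma abs_sum_mul_le {α : ℕ} (d P : Fin α → ℝ) (hd : ∑ k, d k = 0)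
    (hP : ∀ k, P k ∈ Set.Icc (0:ℝ) 1) :
    |∑ k, d k * P k| ≤ (1/2) * ∑ k, |d k| := by
  have key : ∀ e : Fin α → ℝ, (∑ k, e k = 0) → ∑ k, e k * P k ≤ (1/2) * ∑ k, |e k| := by
    intro e he
    have h1 : ∑ k, e k * P k ≤ ∑ k, max (e k) 0 := by
      apply Finset.sum_le_sum
      intro k _
      rcases le_total (e k) 0 with h | h
      · calc e k * P k ≤ 0 := mul_nonpos_of_nonpos_of_nonneg h (hP k).1
          _ ≤ max (e k) 0 := le_max_right _ _
      · calc e k * P k ≤ e k * 1 := mul_le_mul_of_nonneg_left (hP k).2 h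
          _ = e k := mul_one _
          _ ≤ max (e k) 0 := le_max_left _ _
    have h2 : ∑ k, max (e k) 0 = (1/2) * ∑ k, |e k| := by
      have : ∀ k : Fin α, max (e k) 0 = (|e k| + e k) / 2 := by
        intro k
        rcases le_total (e k) 0 with h | h
        · rw [max_eq_right h, abs_of_nonpos h]; ring
        · rw [max_eq_left h, abs_of_nonneg h]; ring
      simp_rw [this]
      rw [← Finset.sum_div, Finset.sum_add_distrib, he]
      ring
    linarith
  have hpos := key d hd
  have hneg := key (fun k => -d k) (by simpa using hd)
  simp only [neg_mul, abs_neg] at hneg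
  rw [Finset.sum_neg_distrib] at hneg
  rw [abs_le]
  constructor <;> linarith

-- one-coordinate swap
lemma expPay_swap {I : Type*} [Fintype I] [DecidableEq I] {α : ℕ}
    {u : (I → Fin α) → ℝ} (hu : ∀ a, u a ∈ Set.Icc (0:ℝ) 1)
    {x x' : I → Fin α → ℝ} (i : I)
    (h : ∀ j, j ≠ i → x j = x' j) (hx : ∀ j, IsDist α (x j)) (hx' : ∀ j, IsDist α (x' j)) :
    |expPay u x - expPay u x'| ≤ tvDist (x i) (x' i) := by
  have hpp : ∀ k, purePay u x i k = purePay u x' i k := by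
    intro k
    unfold purePay
    congr 1
    funext j
    rcases eq_or_ne j i with rfl | hj
    · rw [Function.update_self, Function.update_self]
    · rw [Function.update_of_ne hj, Function.update_of_ne hj, h j hj]
  rw [expPay_decomp u x i, expPay_decomp u x' i]
  simp_rw [hpp]
  have : ∑ k, x i k * purePay u x' i k - ∑ k, x' i k * purePay u x' i k
      = ∑ k, (x i k - x' i k) * purePay u x' i k := by
    rw [← Finset.sum_sub_distrib]
    apply Finset.sum_congr rfl
    intro k _
    ring
  rw [this]
  unfold tvDist
  exact abs_sum_mul_le _ _ (by rw [Finset.sum_sub_distrib, (hx i).2, (hx' i).2]; ring)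
    (fun k => purePay_mem_Icc hu hx' i k)

-- hybrid telescoping
lemma expPay_hybrid {I : Type*} [Fintype I] [DecidableEq I] {α : ℕ}
    {u : (I → Fin α) → ℝ} (hu : ∀ a, u a ∈ Set.Icc (0:ℝ) 1)
    {x x' : I → Fin α → ℝ}
    (hx : ∀ j, IsDist α (x j)) (hx' : ∀ j, IsDist α (x' j)) :
    |expPay u x - expPay u x'| ≤ ∑ i, tvDist (x i) (x' i) := by
  classical
  have key : ∀ S : Finset I,
      |expPay u (fun j => if j ∈ S then x j else x' j) - expPay u x'|
        ≤ ∑ i ∈ S, tvDist (x i) (x' i) := by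
    intro S
    induction S using Finset.induction with
    | empty => simp
    | @insert a S ha ih =>
      have hda : ∀ j, IsDist α ((fun j => if j ∈ insert a S then x j else x' j) j) := by
        intro j; dsimp only; split
        · exact hx j
        · exact hx' j
      have hdS : ∀ j, IsDist α ((fun j => if j ∈ S then x j else x' j) j) := by
        intro j; dsimp only; split
        · exact hx j
        · exact hx' j
      have hswap := expPay_swap (x := fun j => if j ∈ insert a S then x j else x' j)
        (x' := fun j => if j ∈ S then x j else x' j) hu a
        (fun j hj => by simp [Finset.mem_insert, hj]) hda hdS
      have htv : tvDist ((fun j => if j ∈ insert a S then x j else x' j) a)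
          ((fun j => if j ∈ S then x j else x' j) a) ≤ tvDist (x a) (x' a) := by
        simp [ha, Finset.mem_insert]
      rw [Finset.sum_insert ha]
      calc |expPay u (fun j => if j ∈ insert a S then x j else x' j) - expPay u x'|
          ≤ |expPay u (fun j => if j ∈ insert a S then x j else x' j)
              - expPay u (fun j => if j ∈ S then x j else x' j)|
            + |expPay u (fun j => if j ∈ S then x j else x' j) - expPay u x'| := by
            apply abs_sub_le
        _ ≤ tvDist (x a) (x' a) + ∑ i ∈ S, tvDist (x i) (x' i) := by
            apply add_le_add (le_trans hswap htv) ih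
  have := key Finset.univ
  simpa using this


section Aux2
variable {n s α : ℕ}

-- expansion of a pure payoff against a profile
lemma purePay_expand {I : Type*} [Fintype I] [DecidableEq I]
    (v : (I → Fin α) → ℝ) (w : I → Fin α → ℝ) (i : I) (k : Fin α) :
    purePay v w i k = ∑ b : I → Fin α,
      (if b i = k then (1:ℝ) else 0) * (∏ i' ∈ univ.erase i, w i' (b i')) * v b := by
  unfold purePay expPay
  apply Finset.sum_congr rfl
  intro b _
  congr 1
  rw [← Finset.mul_prod_erase univ _ (mem_univ i)]
  rw [Function.update_self]
  congr 1
  apply Finset.prod_congr rfl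
  intro i' hi'
  rw [Function.update_of_ne (Finset.ne_of_mem_erase hi')]

lemma delta_prod {I : Type*} [Fintype I] [DecidableEq I] (b V : I → Fin α) :
    (∏ i', (if b i' = V i' then (1:ℝ) else 0)) = if b = V then 1 else 0 := by
  by_cases hb : b = V
  · subst hb; simp
  · rw [if_neg hb]
    obtain ⟨i₀, hi₀⟩ : ∃ i₀, b i₀ ≠ V i₀ := by
      by_contra hc; push_neg at hc; exact hb (funext hc)
    exact Finset.prod_eq_zero (mem_univ i₀) (if_neg hi₀)

lemma delta_expand {I : Type*} [Fintype I] [DecidableEq I]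
    (v : (I → Fin α) → ℝ) (V : I → Fin α) :
    v V = ∑ b : I → Fin α, (∏ i', (if b i' = V i' then (1:ℝ) else 0)) * v b := by
  simp_rw [delta_prod, ite_mul, one_mul, zero_mul]
  rw [Finset.sum_ite_eq' univ V v]
  simp

-- THE key factorization
lemma pure_group [NeZero α] (u : Fin n → (Fin n → Fin α) → ℝ)
    (x : Fin n × Fin s → Fin α → ℝ) (hx : ∀ ij, IsDist α (x ij))
    (i : Fin n) (j : Fin s) (k : Fin α) :
    purePay (groupPayoff u i j) x (i, j) k
      = purePay (u i) (fun i' => majDist x i') i k := by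
  set δ : Fin α → ℝ := fun b => if b = k then (1:ℝ) else 0 with hδ
  set z := Function.update x (i, j) δ with hz
  -- LHS as sum over h : Fin n → Fin s → Fin α
  have step1 : purePay (groupPayoff u i j) x (i, j) k
      = ∑ h : Fin n → Fin s → Fin α,
          (∏ i', ∏ j', z (i', j') (h i' j'))
            * u i (Function.update (fun i' => maj (h i')) i (h i j)) := by
    unfold purePay expPay groupPayoff
    rw [← Equiv.sum_comp ((Equiv.curry (Fin n) (Fin s) (Fin α)).symm)]
    apply Finset.sum_congr rfl
    intro h _
    simp only [Equiv.curry_symm_apply, Function.uncurry_apply_pair]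
    rw [Fintype.prod_prod_type]
    rfl
  rw [step1]
  -- expand u i by delta over b, swap sums
  have step2 : ∀ h : Fin n → Fin s → Fin α,
      (∏ i', ∏ j', z (i', j') (h i' j'))
        * u i (Function.update (fun i' => maj (h i')) i (h i j))
      = ∑ b : Fin n → Fin α,
          (∏ i', ((∏ j', z (i', j') (h i' j'))
            * (if b i' = (if i' = i then (h i') j else maj (h i')) then (1:ℝ) else 0)))
          * u i b := by
    intro h
    rw [delta_expand (u i) (Function.update (fun i' => maj (h i')) i (h i j)), Finset.mul_sum]
    apply Finset.sum_congr rfl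
    intro b _
    simp only [Function.update_apply]
    rw [Finset.prod_mul_distrib]
    have hcongr : (∏ i', (if b i' = (if i' = i then h i j else maj (h i')) then (1:ℝ) else 0))
         = ∏ i', (if b i' = (if i' = i then (h i') j else maj (h i')) then (1:ℝ) else 0) := by
      apply Finset.prod_congr rfl
      intro i' _
      by_cases hii : i' = i
      · subst hii; rfl
      · simp [hii]
    rw [← hcongr]
    ring
  simp_rw [step2]
  rw [Finset.sum_comm]
  rw [purePay_expand]
  apply Finset.sum_congr rfl
  intro b _
  rw [← Finset.sum_mul]
  congr 1
  rw [sum_prod_pi (fun i' g => (∏ j', z (i', j') (g j'))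
    * (if b i' = (if i' = i then g j else maj g) then (1:ℝ) else 0))]
  rw [← Finset.mul_prod_erase univ _ (mem_univ i)]
  congr 1
  · -- factor at i
    simp only [eq_self_iff_true, if_true]
    have hfac : ∀ g : Fin s → Fin α,
        (∏ j', z (i, j') (g j')) * (if b i = g j then (1:ℝ) else 0)
        = ∏ j', (z (i, j') (g j')
            * (if j' = j then (if b i = g j' then (1:ℝ) else 0) else 1)) := by
      intro g
      rw [Finset.prod_mul_distrib]
      congr 1
      rw [Finset.prod_ite_eq' univ j (fun j' => if b i = g j' then (1:ℝ) else 0)]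
      simp
    simp_rw [hfac]
    rw [sum_prod_pi (fun j' c => z (i, j') c
      * (if j' = j then (if b i = c then (1:ℝ) else 0) else 1))]
    have hrest : ∀ j' ∈ univ, j' ≠ j →
        (∑ c, z (i, j') c * (if j' = j then (if b i = c then (1:ℝ) else 0) else 1)) = 1 := by
      intro j' _ hjj
      simp only [if_neg hjj, mul_one]
      have hne : ((i, j') : Fin n × Fin s) ≠ (i, j) := by simp [hjj]
      simp_rw [hz, Function.update_of_ne hne]
      exact (hx (i, j')).2
    rw [Finset.prod_eq_single_of_mem j (mem_univ j) hrest]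
    simp only [eq_self_iff_true, if_true]
    simp_rw [hz, Function.update_self, hδ]
    simp_rw [ite_mul, one_mul, zero_mul]
    rw [Finset.sum_ite_eq' univ k (fun c => if b i = c then (1:ℝ) else 0)]
    simp
  · -- factors away from i
    apply Finset.prod_congr rfl
    intro i' hi'
    have hii : i' ≠ i := Finset.ne_of_mem_erase hi'
    simp only [if_neg hii]
    unfold majDist
    apply Finset.sum_congr rfl
    intro g _
    congr 1
    · apply Finset.prod_congr rfl
      intro j' _
      have hne : ((i', j') : Fin n × Fin s) ≠ (i, j) := by simp [hii]
      rw [hz, Function.update_of_ne hne]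
    · by_cases hbg : maj g = b i'
      · simp [hbg]
      · simp [hbg, Ne.symm hbg]

lemma majDist_nonneg [NeZero α] (x : Fin n × Fin s → Fin α → ℝ)
    (hx : ∀ ij, IsDist α (x ij)) (i : Fin n) (k : Fin α) : 0 ≤ majDist x i k := by
  apply Finset.sum_nonneg
  intro g _
  apply mul_nonneg (Finset.prod_nonneg fun j _ => (hx (i, j)).1 _)
  split <;> norm_num

lemma majDist_isDist [NeZero α] (x : Fin n × Fin s → Fin α → ℝ)
    (hx : ∀ ij, IsDist α (x ij)) (i : Fin n) : IsDist α (majDist x i) := by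
  refine ⟨majDist_nonneg x hx i, ?_⟩
  unfold majDist
  rw [Finset.sum_comm]
  have : ∀ g : Fin s → Fin α,
      (∑ k, (∏ j, x (i, j) (g j)) * (if maj g = k then (1:ℝ) else 0)) = ∏ j, x (i, j) (g j) := by
    intro g
    rw [← Finset.mul_sum, Finset.sum_ite_eq univ (maj g) (fun _ => (1:ℝ))]
    simp
  simp_rw [this]
  rw [sum_prod_pi (fun j c => x (i, j) c)]
  simp only [fun j => (hx (i, j)).2]
  simp

lemma maj_count [NeZero α] (hα : 0 < α) {g : Fin s → Fin α} {k : Fin α} (hg : maj g = k) :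
    (s : ℝ) ≤ (α : ℝ) * (actCount g k : ℝ) := by
  have hmem := Finset.min'_mem
    (Finset.univ.filter fun k : Fin α => ∀ k', actCount g k' ≤ actCount g k) (by
      obtain ⟨k, -, hk⟩ := Finset.exists_max_image Finset.univ (actCount g) ⟨default, mem_univ _⟩
      exact ⟨k, mem_filter.mpr ⟨mem_univ k, fun k' => hk k' (mem_univ k')⟩⟩)
  have hmax0 : ∀ k', actCount g k' ≤ actCount g (maj g) := by
    have h := (Finset.mem_filter.mp hmem).2
    exact h
  rw [hg] at hmax0
  have hmax : ∀ k', actCount g k' ≤ actCount g k := hmax0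
  have hcard : s = ∑ k' : Fin α, actCount g k' := by
    have := Finset.card_eq_sum_card_fiberwise (f := g) (s := Finset.univ) (t := Finset.univ)
      (fun x _ => mem_univ (g x))
    simpa [actCount] using this
  have hle : s ≤ α * actCount g k := by
    calc s = ∑ k' : Fin α, actCount g k' := hcard
      _ ≤ ∑ _k' : Fin α, actCount g k :=
          Finset.sum_le_sum fun k' _ => hmax k'
      _ = α * actCount g k := by simp [Finset.sum_const, mul_comm]
  exact_mod_cast hle

lemma chernoff [NeZero α] (hα : 0 < α) (x : Fin n × Fin s → Fin α → ℝ)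
    (hx : ∀ ij, IsDist α (x ij)) (i : Fin n) (k : Fin α)
    (hp : ∀ j, x (i, j) k ≤ 1 / (2 * α)) :
    majDist x i k ≤ Real.exp (-(s : ℝ) / (2 * (α : ℝ) ^ 2)) := by
  have hα0 : (0:ℝ) < α := by exact_mod_cast hα
  set l : ℝ := 2 / α with hl
  have hl0 : 0 ≤ l := by positivity
  have hCsum : ∀ g : Fin s → Fin α,
      (actCount g k : ℝ) = ∑ j', (if g j' = k then (1:ℝ) else 0) := by
    intro g
    unfold actCount
    rw [Finset.card_filter]
    push_cast
    apply Finset.sum_congr rfl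
    intro j' _
    split <;> norm_num
  have step1 : majDist x i k ≤ ∑ g : Fin s → Fin α,
      (∏ j, x (i, j) (g j)) * Real.exp (l * ((actCount g k : ℝ) - (s : ℝ) / α)) := by
    apply Finset.sum_le_sum
    intro g _
    apply mul_le_mul_of_nonneg_left _ (Finset.prod_nonneg fun j _ => (hx (i, j)).1 _)
    by_cases hg : maj g = k
    · rw [if_pos hg]
      apply Real.one_le_exp
      have := maj_count hα hg
      have hge : (s : ℝ) / α ≤ (actCount g k : ℝ) := by
        rw [div_le_iff₀ hα0]
        linarith [this]
      nlinarith
    · rw [if_neg hg]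
      positivity
  have step2 : ∀ g : Fin s → Fin α,
      (∏ j, x (i, j) (g j)) * Real.exp (l * ((actCount g k : ℝ) - (s : ℝ) / α))
      = Real.exp (-(l * s / α)) * ∏ j, (x (i, j) (g j)
          * Real.exp (l * (if g j = k then (1:ℝ) else 0))) := by
    intro g
    have e1 : Real.exp (l * ((actCount g k : ℝ) - (s : ℝ) / α))
        = (∏ j, Real.exp (l * (if g j = k then (1:ℝ) else 0))) * Real.exp (-(l * s / α)) := by
      rw [← Real.exp_sum, ← Real.exp_add]
      congr 1
      rw [hCsum g, mul_sub, Finset.mul_sum]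
      ring
    rw [e1, Finset.prod_mul_distrib]
    ring
  simp_rw [step2] at step1
  rw [← Finset.mul_sum] at step1
  rw [sum_prod_pi (fun j c => x (i, j) c * Real.exp (l * (if c = k then (1:ℝ) else 0)))] at step1
  have hfactor : ∀ j : Fin s,
      (∑ c, x (i, j) c * Real.exp (l * (if c = k then (1:ℝ) else 0)))
        = 1 + x (i, j) k * (Real.exp l - 1) := by
    intro j
    have : ∀ c : Fin α, x (i, j) c * Real.exp (l * (if c = k then (1:ℝ) else 0))
        = x (i, j) c + (if c = k then x (i, j) c * (Real.exp l - 1) else 0) := by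
      intro c
      by_cases hc : c = k
      · rw [if_pos hc, if_pos hc, mul_one]; ring
      · rw [if_neg hc, if_neg hc, mul_zero, Real.exp_zero]; ring
    simp_rw [this]
    rw [Finset.sum_add_distrib, (hx (i, j)).2,
      Finset.sum_ite_eq' univ k (fun c => x (i, j) c * (Real.exp l - 1))]
    simp
  simp_rw [hfactor] at step1
  have hbound : ∀ j : Fin s, 1 + x (i, j) k * (Real.exp l - 1)
      ≤ Real.exp (l / (2 * α) + l ^ 2 / 8) := by
    intro j
    have hp0 : 0 ≤ x (i, j) k := (hx (i, j)).1 k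
    have hp1 : x (i, j) k ≤ 1 := by
      have := (hx (i, j)).2
      have h := Finset.single_le_sum (f := x (i, j)) (fun c _ => (hx (i, j)).1 c) (mem_univ k)
      linarith
    calc 1 + x (i, j) k * (Real.exp l - 1)
        ≤ Real.exp (x (i, j) k * l + l ^ 2 / 8) := hoeff_bern _ hp0 hp1 l hl0
      _ ≤ Real.exp (l / (2 * α) + l ^ 2 / 8) := by
          apply Real.exp_le_exp.mpr
          have : x (i, j) k * l ≤ (1 / (2 * α)) * l :=
            mul_le_mul_of_nonneg_right (hp j) hl0
          rw [div_mul_eq_mul_div, one_mul] at this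
          linarith
  have hprod : (∏ j : Fin s, (1 + x (i, j) k * (Real.exp l - 1)))
      ≤ Real.exp ((s : ℝ) * (l / (2 * α) + l ^ 2 / 8)) := by
    calc (∏ j : Fin s, (1 + x (i, j) k * (Real.exp l - 1)))
        ≤ ∏ _j : Fin s, Real.exp (l / (2 * α) + l ^ 2 / 8) := by
          apply Finset.prod_le_prod
          · intro j _
            have hp0 : 0 ≤ x (i, j) k := (hx (i, j)).1 k
            have : (1:ℝ) ≤ Real.exp l := Real.one_le_exp hl0
            nlinarith
          · exact fun j _ => hbound j
      _ = Real.exp ((s : ℝ) * (l / (2 * α) + l ^ 2 / 8)) := by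
          rw [Finset.prod_const, Finset.card_univ, Fintype.card_fin,
            ← Real.exp_nat_mul]
  have final : majDist x i k ≤ Real.exp (-(l * s / α))
      * Real.exp ((s : ℝ) * (l / (2 * α) + l ^ 2 / 8)) := by
    refine le_trans step1 ?_
    exact mul_le_mul_of_nonneg_left hprod (Real.exp_pos _).le
  rw [← Real.exp_add] at final
  have hexp : -(l * (s:ℝ) / (α:ℝ)) + (s : ℝ) * (l / (2 * (α:ℝ)) + l ^ 2 / 8)
      = -(s : ℝ) / (2 * (α : ℝ) ^ 2) := by
    rw [hl]
    have hne : (α : ℝ) ≠ 0 := hα0.ne'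
    field_simp
    ring
  rw [hexp] at final
  exact final

end Aux2
end AuxProofs

theorem ane_to_wsne_main {n α : ℕ} (hn : 0 < n) (hα : 0 < α) [NeZero α]
    (ε : ℝ) (hε : 0 < ε) (hε1 : ε < 1) (hαεn : (α : ℝ) * ε / n < 1)
    {s : ℕ} (hs : s = 2 * α ^ 2 * ⌈Real.log ((n : ℝ) / ε)⌉₊)
    (u : Fin n → (Fin n → Fin α) → ℝ)
    (hu : ∀ i a, u i a ∈ Set.Icc (0:ℝ) 1)
    (x : Fin n × Fin s → Fin α → ℝ) (hx : ∀ ij, IsDist α (x ij))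
    (hane : IsANE (fun ij : Fin n × Fin s => groupPayoff u ij.1 ij.2) x ε)
    (c : Fin n → Fin α → ℝ)
    (hc : ∀ i k, c i k = if majDist x i k ≤ ε / n then majDist x i k else 0)
    (y : Fin n → Fin α → ℝ)
    (hy : ∀ i k, y i k = (majDist x i k - c i k) / (1 - ∑ j, c i j)) :
    IsWSNE u y (4 * α * ε) := by
  intro i k hk k'
  have hn0 : (0:ℝ) < n := by exact_mod_cast hn
  have hα0 : (0:ℝ) < α := by exact_mod_cast hα
  have hεn : 0 < ε / n := div_pos hε hn0
  have hXbd : ∀ i' : Fin n, IsDist α ((fun i'' => majDist x i'') i') :=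
    fun i' => majDist_isDist x hx i'
  have hc0 : ∀ i' k'', 0 ≤ c i' k'' := by
    intro i' k''; rw [hc]; split
    · exact majDist_nonneg x hx i' k''
    · exact le_refl 0
  have hcle : ∀ i' k'', c i' k'' ≤ majDist x i' k'' := by
    intro i' k''; rw [hc]; split
    · exact le_rfl
    · exact majDist_nonneg x hx i' k''
  have hcen : ∀ i' k'', c i' k'' ≤ ε / n := by
    intro i' k''; rw [hc]; split
    · assumption
    · exact hεn.le
  have hCle : ∀ i', (∑ j, c i' j) ≤ (α:ℝ) * ε / n := by
    intro i'
    calc (∑ j, c i' j) ≤ ∑ _j : Fin α, ε / n := Finset.sum_le_sum fun j _ => hcen i' j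
      _ = (α:ℝ) * (ε/n) := by
          rw [Finset.sum_const, Finset.card_univ, Fintype.card_fin, nsmul_eq_mul]
      _ = (α:ℝ) * ε / n := by ring
  have hC0 : ∀ i', 0 ≤ ∑ j, c i' j := fun i' => Finset.sum_nonneg fun j _ => hc0 i' j
  have hClt1 : ∀ i', (∑ j, c i' j) < 1 := fun i' => lt_of_le_of_lt (hCle i') hαεn
  have hyd : ∀ i', IsDist α (y i') := by
    intro i'
    constructor
    · intro k''; rw [hy]
      exact div_nonneg (sub_nonneg.mpr (hcle i' k'')) (by linarith [hClt1 i'])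
    · simp_rw [hy]
      rw [← Finset.sum_div, Finset.sum_sub_distrib, (majDist_isDist x hx i').2]
      exact div_self (by linarith [hClt1 i'])
  rcases le_or_gt ((α:ℝ) * ε) 1 with hsmall | hbig
  swap
  · have h1 := (purePay_mem_Icc (fun a => hu i a) hyd i k').2
    have h2 := (purePay_mem_Icc (fun a => hu i a) hyd i k).1
    linarith
  -- main case
  have hkbig : ε / n < majDist x i k := by
    by_contra hle; push_neg at hle
    have h1 : c i k = majDist x i k := by rw [hc, if_pos hle]
    have h2 : y i k = 0 := by rw [hy, h1]; simp
    rw [h2] at hk; exact lt_irrefl 0 hk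
  obtain ⟨km, -, hkm0⟩ := Finset.exists_max_image Finset.univ
    (fun k'' => purePay (u i) (fun i'' => majDist x i'') i k'') ⟨k, mem_univ k⟩
  have hkm : ∀ k'' : Fin α, purePay (u i) (fun i'' => majDist x i'') i k''
      ≤ purePay (u i) (fun i'' => majDist x i'') i km := by
    intro k''; exact hkm0 k'' (mem_univ k'')
  have hane' : ∀ j : Fin s,
      purePay (u i) (fun i'' => majDist x i'') i km - ε
        ≤ ∑ k'', x (i,j) k'' * purePay (u i) (fun i'' => majDist x i'') i k'' := by
    intro j
    have h1 : purePay (groupPayoff u i j) x (i, j) km - ε ≤ expPay (groupPayoff u i j) x :=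
      hane (i, j) km
    rw [pure_group u x hx i j km] at h1
    rw [expPay_decomp (groupPayoff u i j) x (i, j)] at h1
    simp only [pure_group u x hx i j] at h1
    exact h1
  have hmass : purePay (u i) (fun i'' => majDist x i'') i km
      - purePay (u i) (fun i'' => majDist x i'') i k ≤ 2 * α * ε := by
    by_contra hgap; push_neg at hgap
    have hxk : ∀ j : Fin s, x (i, j) k ≤ 1 / (2 * α) := by
      intro j
      have h1 := hane' j
      have heq : (∑ k'', x (i,j) k'' * purePay (u i) (fun i'' => majDist x i'') i k'')
          = purePay (u i) (fun i'' => majDist x i'') i km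
            - ∑ k'', x (i,j) k'' * (purePay (u i) (fun i'' => majDist x i'') i km
              - purePay (u i) (fun i'' => majDist x i'') i k'') := by
        simp_rw [mul_sub]
        rw [Finset.sum_sub_distrib, ← Finset.sum_mul, (hx (i,j)).2]
        ring
      have hterm : x (i,j) k * (purePay (u i) (fun i'' => majDist x i'') i km
            - purePay (u i) (fun i'' => majDist x i'') i k)
          ≤ ∑ k'', x (i,j) k'' * (purePay (u i) (fun i'' => majDist x i'') i km
            - purePay (u i) (fun i'' => majDist x i'') i k'') :=
        Finset.single_le_sum
          (f := fun k'' => x (i,j) k'' * (purePay (u i) (fun i'' => majDist x i'') i km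
            - purePay (u i) (fun i'' => majDist x i'') i k''))
          (fun k'' _ => mul_nonneg ((hx (i,j)).1 k'') (sub_nonneg.mpr (hkm k''))) (mem_univ k)
      have h3 : x (i,j) k * (purePay (u i) (fun i'' => majDist x i'') i km
          - purePay (u i) (fun i'' => majDist x i'') i k) ≤ ε := by
        rw [heq] at h1; linarith
      rw [le_div_iff₀ (by positivity : (0:ℝ) < 2 * α)]
      nlinarith [mul_le_mul_of_nonneg_left hgap.le ((hx (i,j)).1 k), hε]
    have hch := chernoff hα x hx i k hxk
    have hs2 : (s:ℝ)/(2*(α:ℝ)^2) = ((⌈Real.log ((n:ℝ)/ε)⌉₊ : ℕ) : ℝ) := by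
      rw [hs]; push_cast; field_simp
      all_goals ring
    have hlogle : Real.log ((n:ℝ)/ε) ≤ ((⌈Real.log ((n:ℝ)/ε)⌉₊ : ℕ) : ℝ) := Nat.le_ceil _
    have hfrac : (0:ℝ) < (n:ℝ)/ε := div_pos hn0 hε
    have hexple : Real.exp (-(s:ℝ)/(2*(α:ℝ)^2)) ≤ ε / n := by
      have h4 : Real.exp (-(s:ℝ)/(2*(α:ℝ)^2)) ≤ Real.exp (-Real.log ((n:ℝ)/ε)) := by
        apply Real.exp_le_exp.mpr
        rw [neg_div, hs2]
        linarith
      rw [Real.exp_neg, Real.exp_log hfrac, inv_div] at h4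
      exact h4
    linarith [hkbig, le_trans hch hexple]
  -- transfer bound
  have hq0 : (0:ℝ) ≤ (α:ℝ) * ε / n := by positivity
  have hq1 : (α:ℝ) * ε / n < 1 := hαεn
  have htrans : ∀ k'' : Fin α,
      |purePay (u i) y i k'' - purePay (u i) (fun i'' => majDist x i'') i k''| ≤ (α:ℝ) * ε := by
    intro k''
    have hhyb := expPay_hybrid (u := u i) (fun a => hu i a)
      (update_isDist hyd i (delta_isDist k'')) (update_isDist hXbd i (delta_isDist k''))
    have htv : ∀ i' : Fin n,
        tvDist (Function.update y i (fun b => if b = k'' then (1:ℝ) else 0) i')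
          (Function.update (fun i'' => majDist x i'') i (fun b => if b = k'' then (1:ℝ) else 0) i')
          ≤ (if i' = i then 0 else ((α:ℝ) * ε / n) / (1 - (α:ℝ) * ε / n)) := by
      intro i'
      rcases eq_or_ne i' i with rfl | hne
      · rw [Function.update_self, Function.update_self, if_pos rfl]
        unfold tvDist; simp
      · rw [Function.update_of_ne hne, Function.update_of_ne hne, if_neg hne]
        have hC1 : 0 < 1 - ∑ j, c i' j := by linarith [hClt1 i']
        have hstep : tvDist (y i') (majDist x i')
            ≤ (∑ j, c i' j) / (1 - ∑ j, c i' j) := by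
          unfold tvDist
          have hub : ∀ k₀, |y i' k₀ - majDist x i' k₀|
              ≤ ((∑ j, c i' j) * majDist x i' k₀ + c i' k₀) / (1 - ∑ j, c i' j) := by
            intro k₀
            rw [hy]
            have hrw : (majDist x i' k₀ - c i' k₀) / (1 - ∑ j, c i' j) - majDist x i' k₀
                = ((∑ j, c i' j) * majDist x i' k₀ - c i' k₀) / (1 - ∑ j, c i' j) := by
              field_simp
              ring
            rw [hrw, abs_div, abs_of_pos hC1]
            gcongr
            calc |(∑ j, c i' j) * majDist x i' k₀ - c i' k₀|
                ≤ |(∑ j, c i' j) * majDist x i' k₀| + |c i' k₀| := abs_sub _ _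
              _ = (∑ j, c i' j) * majDist x i' k₀ + c i' k₀ := by
                  rw [abs_of_nonneg (mul_nonneg (hC0 i') (majDist_nonneg x hx i' k₀)),
                    abs_of_nonneg (hc0 i' k₀)]
          calc (1/2 : ℝ) * ∑ k₀, |y i' k₀ - majDist x i' k₀|
              ≤ (1/2 : ℝ) * ∑ k₀, ((∑ j, c i' j) * majDist x i' k₀ + c i' k₀)
                  / (1 - ∑ j, c i' j) :=
                mul_le_mul_of_nonneg_left (Finset.sum_le_sum fun k₀ _ => hub k₀) (by norm_num)
            _ = (∑ j, c i' j) / (1 - ∑ j, c i' j) := by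
                rw [← Finset.sum_div, Finset.sum_add_distrib, ← Finset.mul_sum,
                  (majDist_isDist x hx i').2]
                field_simp
                all_goals ring
        refine le_trans hstep ?_
        rw [div_le_div_iff₀ hC1 (by linarith)]
        nlinarith [hCle i', hC0 i']
    have hsum : (∑ i' : Fin n, (if i' = i then (0:ℝ)
        else ((α:ℝ) * ε / n) / (1 - (α:ℝ) * ε / n)))
        = ((n:ℝ) - 1) * (((α:ℝ) * ε / n) / (1 - (α:ℝ) * ε / n)) := by
      have hpt : ∀ i' : Fin n, (if i' = i then (0:ℝ)
          else ((α:ℝ) * ε / n) / (1 - (α:ℝ) * ε / n))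
          = ((α:ℝ) * ε / n) / (1 - (α:ℝ) * ε / n)
            - (if i' = i then ((α:ℝ) * ε / n) / (1 - (α:ℝ) * ε / n) else 0) := by
        intro i'; split <;> ring
      simp_rw [hpt]
      rw [Finset.sum_sub_distrib, Finset.sum_const, Finset.card_univ, Fintype.card_fin,
        Finset.sum_ite_eq' Finset.univ i
          (fun _ => ((α:ℝ) * ε / n) / (1 - (α:ℝ) * ε / n))]
      simp [nsmul_eq_mul]
      ring
    have hT : ((n:ℝ) - 1) * (((α:ℝ) * ε / n) / (1 - (α:ℝ) * ε / n)) ≤ (α:ℝ) * ε := by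
      have h1q : (0:ℝ) < 1 - (α:ℝ) * ε / n := by linarith
      have hnq : (n:ℝ) * ((α:ℝ) * ε / n) = (α:ℝ) * ε := by field_simp
      rw [← mul_div_assoc, div_le_iff₀ h1q]
      nlinarith [hq0, hsmall, hnq]
    calc |purePay (u i) y i k'' - purePay (u i) (fun i'' => majDist x i'') i k''|
        = |expPay (u i) (Function.update y i (fun b => if b = k'' then (1:ℝ) else 0))
           - expPay (u i) (Function.update (fun i'' => majDist x i'') i
              (fun b => if b = k'' then (1:ℝ) else 0))| := rfl
      _ ≤ ∑ i', tvDist (Function.update y i (fun b => if b = k'' then (1:ℝ) else 0) i')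
            (Function.update (fun i'' => majDist x i'') i
              (fun b => if b = k'' then (1:ℝ) else 0) i') := hhyb
      _ ≤ ∑ i' : Fin n, (if i' = i then (0:ℝ)
            else ((α:ℝ) * ε / n) / (1 - (α:ℝ) * ε / n)) :=
          Finset.sum_le_sum fun i' _ => htv i'
      _ = ((n:ℝ) - 1) * (((α:ℝ) * ε / n) / (1 - (α:ℝ) * ε / n)) := hsum
      _ ≤ (α:ℝ) * ε := hT
  have h1 := htrans k'
  have h2 := htrans k
  have h3 := hkm k'
  rw [abs_le] at h1 h2
  linarith [h1.2, h2.1, h3, hmass]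
end

section
/- Let x̄_i and y_i (i ∈ [n]) be distributions on [α] such that y_i is the ε/n-truncation-and-rescaling of x̄_i. If for some player i and actions ℓ, k we have y_{i,ℓ} > 0 and u_i(k, y_{-i}) > u_i(ℓ, y_{-i}) + 4αε, then u_i(k, x̄_{-i}) > u_i(ℓ, x̄_{-i}) + 2αε. -/
open Finset

lemma key_sum {I : Type*} [Fintype I] [DecidableEq I] {α : ℕ}
    (z : I → Fin α → ℝ) (j : I) (hz1 : ∀ i, i ≠ j → ∑ k, z i k = 1)
    (g : Fin α → ℝ) :
    (∑ a : I → Fin α, g (a j) * ∏ i ∈ univ.erase j, z i (a i)) = ∑ k, g k := by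
  have h1 : (∑ a : I → Fin α, g (a j) * ∏ i ∈ univ.erase j, z i (a i))
      = ∑ a : I → Fin α, ∏ i, (fun i k => if i = j then g k else z i k) i (a i) := by
    refine Finset.sum_congr rfl fun a _ => ?_
    rw [← Finset.mul_prod_erase univ _ (Finset.mem_univ j)]
    simp only [if_pos rfl]
    congr 1
    exact Finset.prod_congr rfl fun i hi => by
      simp [if_neg (Finset.ne_of_mem_erase hi)]
  rw [h1, ← Fintype.prod_sum (fun i k => if i = j then g k else z i k),
    ← Finset.mul_prod_erase univ _ (Finset.mem_univ j)]
  simp only [if_pos rfl]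
  have h2 : ∏ i ∈ univ.erase j, (∑ k, if i = j then g k else z i k) = 1 := by
    refine Finset.prod_eq_one fun i hi => ?_
    have hij := Finset.ne_of_mem_erase hi
    simp only [if_neg hij]
    exact hz1 i hij
  rw [h2, mul_one]
  simp

lemma swap_bound {I : Type*} [Fintype I] [DecidableEq I] {α : ℕ}
    (u : (I → Fin α) → ℝ) (hu : ∀ a, u a ∈ Set.Icc (0:ℝ) 1)
    (z : I → Fin α → ℝ) (j : I)
    (hz0 : ∀ i, i ≠ j → ∀ k, 0 ≤ z i k) (hz1 : ∀ i, i ≠ j → ∑ k, z i k = 1)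
    (p q : Fin α → ℝ) (hp : ∑ k, p k = 1) (hq : ∑ k, q k = 1) :
    |expPay u (Function.update z j p) - expPay u (Function.update z j q)|
      ≤ (1/2) * ∑ k, |p k - q k| := by
  set P : (I → Fin α) → ℝ := fun a => ∏ i ∈ univ.erase j, z i (a i) with hP
  have hP0 : ∀ a, 0 ≤ P a := fun a =>
    Finset.prod_nonneg fun i hi => hz0 i (Finset.ne_of_mem_erase hi) _
  have hexp : ∀ f : Fin α → ℝ, expPay u (Function.update z j f)
      = ∑ a : I → Fin α, (f (a j) * P a) * u a := by
    intro f
    refine Finset.sum_congr rfl fun a _ => ?_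
    congr 1
    rw [← Finset.mul_prod_erase univ _ (Finset.mem_univ j)]
    congr 1
    · simp
    · exact Finset.prod_congr rfl fun i hi => by
        rw [Function.update_of_ne (Finset.ne_of_mem_erase hi)]
  have hzero : ∑ a : I → Fin α, (p (a j) - q (a j)) * P a = 0 := by
    rw [key_sum z j hz1 (fun m => p m - q m), Finset.sum_sub_distrib, hp, hq]
    ring
  have habs : ∑ a : I → Fin α, |p (a j) - q (a j)| * P a = ∑ k, |p k - q k| :=
    key_sum z j hz1 (fun m => |p m - q m|)
  have hdiff : expPay u (Function.update z j p) - expPay u (Function.update z j q)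
      = ∑ a : I → Fin α, ((p (a j) - q (a j)) * P a) * (u a - 1/2) := by
    rw [hexp p, hexp q, ← Finset.sum_sub_distrib]
    have hsplit : ∀ a : I → Fin α, (p (a j) * P a) * u a - (q (a j) * P a) * u a
        = ((p (a j) - q (a j)) * P a) * (u a - 1/2)
          + ((p (a j) - q (a j)) * P a) * (1/2) := fun a => by ring
    rw [Finset.sum_congr rfl fun a _ => hsplit a, Finset.sum_add_distrib,
      ← Finset.sum_mul, hzero, zero_mul, add_zero]
  rw [hdiff]
  calc |∑ a : I → Fin α, ((p (a j) - q (a j)) * P a) * (u a - 1/2)|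
      ≤ ∑ a : I → Fin α, |((p (a j) - q (a j)) * P a) * (u a - 1/2)| :=
        Finset.abs_sum_le_sum_abs _ _
    _ ≤ ∑ a : I → Fin α, (|p (a j) - q (a j)| * P a) * (1/2) := by
        refine Finset.sum_le_sum fun a _ => ?_
        rw [abs_mul, abs_mul, abs_of_nonneg (hP0 a)]
        refine mul_le_mul_of_nonneg_left ?_ (mul_nonneg (abs_nonneg _) (hP0 a))
        have h := hu a
        simp only [Set.mem_Icc] at h
        rw [abs_le]
        constructor <;> linarith [h.1, h.2]
    _ = (1/2) * ∑ k, |p k - q k| := by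
        rw [← Finset.sum_mul, habs, mul_comm]

lemma expPay_dist_bound {I : Type*} [Fintype I] [DecidableEq I] {α : ℕ}
    (u : (I → Fin α) → ℝ) (hu : ∀ a, u a ∈ Set.Icc (0:ℝ) 1)
    (x y : I → Fin α → ℝ) (hx : ∀ j, IsDist α (x j)) (hy : ∀ j, IsDist α (y j)) :
    |expPay u y - expPay u x| ≤ ∑ j, (1/2) * ∑ k, |y j k - x j k| := by
  have main : ∀ s : Finset I,
      |expPay u (fun j => if j ∈ s then y j else x j) - expPay u x|
        ≤ ∑ j ∈ s, (1/2) * ∑ k, |y j k - x j k| := by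
    intro s
    induction s using Finset.induction_on with
    | empty =>
        simp only [Finset.notMem_empty, if_false, Finset.sum_empty]
        simp
    | @insert a s ha ih =>
        set z : I → Fin α → ℝ := fun j => if j ∈ s then y j else x j with hz
        have hzd : ∀ j, IsDist α (z j) := by
          intro j; simp only [hz]; split <;> [exact hy j; exact hx j]
        have h1 : (fun j => if j ∈ insert a s then y j else x j)
            = Function.update z a (y a) := by
          funext j
          by_cases hj : j = a
          · subst hj; simp [Function.update_self]
          · simp [Function.update_of_ne hj, hz, Finset.mem_insert, hj]
        have h2 : z = Function.update z a (x a) := by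
          funext j
          by_cases hj : j = a
          · subst hj; simp [Function.update_self, hz, ha]
          · simp [Function.update_of_ne hj]
        rw [h1, Finset.sum_insert ha]
        calc |expPay u (Function.update z a (y a)) - expPay u x|
            ≤ |expPay u (Function.update z a (y a)) - expPay u (Function.update z a (x a))|
              + |expPay u (Function.update z a (x a)) - expPay u x| := abs_sub_le _ _ _
          _ ≤ (1/2) * ∑ k, |y a k - x a k| + ∑ j ∈ s, (1/2) * ∑ k, |y j k - x j k| := by
              refine add_le_add ?_ ?_
              · exact swap_bound u hu z a (fun i _ k => (hzd i).1 k)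
                  (fun i _ => (hzd i).2) (y a) (x a) (hy a).2 (hx a).2
              · rw [← h2]; exact ih
  have := main Finset.univ
  simpa using this

theorem truncated_gap_transfer {n α : ℕ} (hn : 0 < n) (hα : 0 < α)
    (ε : ℝ) (hε : 0 < ε) (hαεn : (α : ℝ) * ε / n < 1)
    (u : Fin n → (Fin n → Fin α) → ℝ)
    (hu : ∀ i a, u i a ∈ Set.Icc (0:ℝ) 1)
    (xbar : Fin n → Fin α → ℝ) (hxbar : ∀ i, IsDist α (xbar i))
    (c : Fin n → Fin α → ℝ)
    (hc : ∀ i k, c i k = if xbar i k ≤ ε / n then xbar i k else 0)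
    (y : Fin n → Fin α → ℝ)
    (hy : ∀ i k, y i k = (xbar i k - c i k) / (1 - ∑ j, c i j))
    (i : Fin n) (ℓ k : Fin α) (hpos : 0 < y i ℓ)
    (hgap : purePay (u i) y i ℓ + 4 * α * ε < purePay (u i) y i k) :
    purePay (u i) xbar i ℓ + 2 * α * ε < purePay (u i) xbar i k := by
  have hn' : (0:ℝ) < n := by exact_mod_cast hn
  have hεn : 0 < ε / n := div_pos hε hn'
  set e : Fin α → Fin α → ℝ := fun m b => if b = m then (1:ℝ) else 0 with he
  have hedist : ∀ m, IsDist α (e m) := by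
    intro m
    constructor
    · intro b; simp only [he]; split_ifs <;> norm_num
    · simp [he]
  have hc0 : ∀ j m, 0 ≤ c j m := by
    intro j m; rw [hc]; split_ifs
    · exact (hxbar j).1 m
    · exact le_rfl
  have hcle : ∀ j m, c j m ≤ ε / n := by
    intro j m; rw [hc]; split_ifs with h
    · exact h
    · exact le_of_lt hεn
  have hcx : ∀ j m, c j m ≤ xbar j m := by
    intro j m; rw [hc]; split_ifs
    · exact le_rfl
    · exact (hxbar j).1 m
  set S : Fin n → ℝ := fun j => ∑ m, c j m with hSdef
  have hS0 : ∀ j, 0 ≤ S j := fun j => Finset.sum_nonneg fun m _ => hc0 j m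
  have hSle : ∀ j, S j ≤ α * ε / n := by
    intro j
    calc S j ≤ ∑ _m : Fin α, ε / n := Finset.sum_le_sum fun m _ => hcle j m
      _ = α * ε / n := by
          rw [Finset.sum_const, Finset.card_univ, Fintype.card_fin, nsmul_eq_mul]
          ring
  have hS1 : ∀ j, S j < 1 := fun j => lt_of_le_of_lt (hSle j) hαεn
  have h1S : ∀ j, 0 < 1 - S j := fun j => by linarith [hS1 j]
  have hydist : ∀ j, IsDist α (y j) := by
    intro j
    constructor
    · intro m; rw [hy]
      exact div_nonneg (by linarith [hcx j m]) (le_of_lt (h1S j))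
    · have h1 : ∑ m, y j m = (∑ m, (xbar j m - c j m)) / (1 - S j) := by
        simp only [hy]; rw [← Finset.sum_div]
      rw [h1, Finset.sum_sub_distrib, (hxbar j).2]
      exact div_self (ne_of_gt (h1S j))
  have hL1 : ∀ j, ∑ m, |y j m - xbar j m| ≤ 2 * (α * ε / n) := by
    intro j
    have key : ∀ m, |y j m - xbar j m|
        = ((1 - S j) * c j m + S j * (xbar j m - c j m)) / (1 - S j) := by
      intro m
      have hne : (1 : ℝ) - S j ≠ 0 := ne_of_gt (h1S j)
      have h1 : y j m - xbar j m = (S j * xbar j m - c j m) / (1 - S j) := by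
        have hS : (1 - ∑ j_1, c j j_1) = 1 - S j := rfl
        rw [hy, hS, eq_div_iff hne, sub_mul, div_mul_cancel₀ _ hne]; ring
      rw [h1, abs_div, abs_of_pos (h1S j)]
      congr 1
      by_cases hm : xbar j m ≤ ε / n
      · have hcm : c j m = xbar j m := by rw [hc]; exact if_pos hm
        rw [hcm, abs_of_nonpos (by nlinarith [(hxbar j).1 m, hS1 j])]
        ring
      · have hcm : c j m = 0 := by rw [hc]; exact if_neg hm
        rw [hcm, abs_of_nonneg (by nlinarith [(hxbar j).1 m, hS0 j])]
        ring
    rw [Finset.sum_congr rfl fun m _ => key m, ← Finset.sum_div]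
    have h2 : ∑ m, ((1 - S j) * c j m + S j * (xbar j m - c j m))
        = 2 * S j * (1 - S j) := by
      rw [Finset.sum_add_distrib, ← Finset.mul_sum, ← Finset.mul_sum,
        Finset.sum_sub_distrib, (hxbar j).2]
      have : ∑ m, c j m = S j := rfl
      rw [this]; ring
    rw [h2, mul_div_assoc, div_self (ne_of_gt (h1S j)), mul_one]
    linarith [hSle j]
  have hbound : ∀ m : Fin α,
      |purePay (u i) y i m - purePay (u i) xbar i m| ≤ α * ε := by
    intro m
    have hxd : ∀ j, IsDist α (Function.update xbar i (e m) j) := by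
      intro j
      by_cases hj : j = i
      · subst hj; rw [Function.update_self]; exact hedist m
      · rw [Function.update_of_ne hj]; exact hxbar j
    have hyd : ∀ j, IsDist α (Function.update y i (e m) j) := by
      intro j
      by_cases hj : j = i
      · subst hj; rw [Function.update_self]; exact hedist m
      · rw [Function.update_of_ne hj]; exact hydist j
    have hmain := expPay_dist_bound (u i) (hu i)
      (Function.update xbar i (e m)) (Function.update y i (e m)) hxd hyd
    calc |purePay (u i) y i m - purePay (u i) xbar i m|
        = |expPay (u i) (Function.update y i (e m))
            - expPay (u i) (Function.update xbar i (e m))| := rfl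
      _ ≤ ∑ j, (1/2) * ∑ b, |Function.update y i (e m) j b
            - Function.update xbar i (e m) j b| := hmain
      _ ≤ ∑ _j : Fin n, α * ε / n := by
          refine Finset.sum_le_sum fun j _ => ?_
          by_cases hj : j = i
          · subst hj
            rw [Function.update_self, Function.update_self]
            simp only [sub_self, abs_zero, Finset.sum_const_zero, mul_zero]
            positivity
          · rw [Function.update_of_ne hj, Function.update_of_ne hj]
            have := hL1 j
            linarith
      _ = α * ε := by
          rw [Finset.sum_const, Finset.card_univ, Fintype.card_fin, nsmul_eq_mul]
          field_simp
  have hk := abs_le.mp (hbound k)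
  have hl := abs_le.mp (hbound ℓ)
  have h4 : (4:ℝ) * α * ε = 4 * (α * ε) := by ring
  have h2 : (2:ℝ) * α * ε = 2 * (α * ε) := by ring
  rw [h4] at hgap
  rw [h2]
  linarith [hk.1, hk.2, hl.1, hl.2, hgap]
end
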